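/- Let k ≥ 2 and let ℓ and m be k-subsets with ℓ_i = m_j for some indices 1 ≤ i, j ≤ k. Let ℓ̃ and m̃ be the (k−1)-subsets obtained by deleting the i-th entry of ℓ and the j-th entry of m respectively. Then α(ℓ̃, m̃) ≥ α(ℓ,m) − 1. -/

import Mathlib

/-- `α(ℓ,m)`: the largest `p ∈ {1,…,k}` such that `ℓ i ≤ m j` for all `1 ≤ i,j ≤ k`
with `j − i = k − p`, and `0` if no such `p` exists. -/
noncomputable def kAlpha (k : ℕ) (ℓ m : Fin k → ℤ) : ℕ :=
  sSup {p : ℕ | 1 ≤ p ∧ p ≤ k ∧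
    ∀ i j : Fin k, (j.val : ℤ) - (i.val : ℤ) = (k : ℤ) - (p : ℤ) → ℓ i ≤ m j}

/-- Let `k = n + 1 ≥ 2` and let `ℓ`, `m` be `k`-subsets with
`ℓ i = m j`.  Deleting the `i`-th entry of `ℓ` and the `j`-th entry of `m`
(implemented via `Fin.succAbove`) yields `(k−1)`-subsets `ℓ̃ = ℓ ∘ i.succAbove`,
`m̃ = m ∘ j.succAbove`; then `α(ℓ̃,m̃) ≥ α(ℓ,m) − 1`. -/
theorem alpha_delete_ge (n : ℕ) (hn : 1 ≤ n) (ℓ m : Fin (n + 1) → ℤ)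
    (hℓ : StrictMono ℓ) (hm : StrictMono m) (i j : Fin (n + 1)) (h : ℓ i = m j) :
    (kAlpha (n + 1) ℓ m : ℤ) - 1 ≤ (kAlpha n (ℓ ∘ i.succAbove) (m ∘ j.succAbove) : ℤ) := by
  set α := kAlpha (n + 1) ℓ m with hαdef
  by_cases hα : α ≤ 1
  · have : (0 : ℤ) ≤ (kAlpha n (ℓ ∘ i.succAbove) (m ∘ j.succAbove) : ℤ) := Int.ofNat_nonneg _
    omega
  · push_neg at hα
    set S := {p : ℕ | 1 ≤ p ∧ p ≤ n + 1 ∧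
      ∀ i' j' : Fin (n + 1), (j'.val : ℤ) - (i'.val : ℤ) = ((n+1 : ℕ) : ℤ) - (p : ℤ) →
        ℓ i' ≤ m j'} with hSdef
    have hbdd : BddAbove S := ⟨n + 1, fun x hx => hx.2.1⟩
    have hne : S.Nonempty := by
      by_contra hc
      rw [Set.not_nonempty_iff_eq_empty] at hc
      have : α = 0 := by
        rw [hαdef, kAlpha, show {p : ℕ | 1 ≤ p ∧ p ≤ n + 1 ∧
          ∀ i j : Fin (n+1), (j.val : ℤ) - (i.val : ℤ) = ((n+1:ℕ) : ℤ) - (p : ℤ) → ℓ i ≤ m j}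
          = S from rfl, hc, csSup_empty]; rfl
      omega
    have hmem : α ∈ S := Nat.sSup_mem hne hbdd
    obtain ⟨-, hαle, H⟩ := hmem
    -- show α - 1 belongs to the set for the deleted sequences
    have hkey : ∀ a b : Fin n, (b.val : ℤ) - (a.val : ℤ) = (n : ℤ) - ((α - 1 : ℕ) : ℤ) →
        (ℓ ∘ i.succAbove) a ≤ (m ∘ j.succAbove) b := by
      intro a b hab
      have hcast : ((α - 1 : ℕ) : ℤ) = (α : ℤ) - 1 := by omega
      rw [hcast] at hab
      have hdiff : (b.val : ℤ) - (a.val : ℤ) = ((n+1 : ℕ) : ℤ) - (α : ℤ) := by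
        push_cast at hab ⊢; omega
      simp only [Function.comp_apply]
      rcases lt_or_ge a.castSucc i with hai | hai <;>
        rcases lt_or_ge b.castSucc j with hbj | hbj
      · rw [Fin.succAbove_of_castSucc_lt _ _ hai, Fin.succAbove_of_castSucc_lt _ _ hbj]
        exact H a.castSucc b.castSucc (by simp; push_cast at hdiff ⊢; omega)
      · rw [Fin.succAbove_of_castSucc_lt _ _ hai, Fin.succAbove_of_le_castSucc _ _ hbj]
        have h1 : ℓ a.castSucc ≤ m b.castSucc :=
          H a.castSucc b.castSucc (by simp; push_cast at hdiff ⊢; omega)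
        exact h1.trans (hm (Fin.castSucc_lt_succ (i := b))).le
      · -- impossible case: i ≤ a.castSucc and b.castSucc < j
        exfalso
        have h1 : ℓ a.succ ≤ m b.succ :=
          H a.succ b.succ (by simp; push_cast at hdiff ⊢; omega)
        have h2 : m b.succ ≤ m j := hm.monotone (by
          rw [Fin.le_def]; simp only [Fin.val_succ]
          have := hbj; rw [Fin.lt_def] at this; simp at this; omega)
        have h3 : ℓ i ≤ ℓ a.castSucc := hℓ.monotone hai
        have h4 : ℓ a.castSucc < ℓ a.succ := hℓ (Fin.castSucc_lt_succ (i := a))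
        linarith [h.symm ▸ h2]
      · rw [Fin.succAbove_of_le_castSucc _ _ hai, Fin.succAbove_of_le_castSucc _ _ hbj]
        exact H a.succ b.succ (by simp; push_cast at hdiff ⊢; omega)
    have hmem' : α - 1 ∈ {p : ℕ | 1 ≤ p ∧ p ≤ n ∧
        ∀ a b : Fin n, (b.val : ℤ) - (a.val : ℤ) = (n : ℤ) - (p : ℤ) →
          (ℓ ∘ i.succAbove) a ≤ (m ∘ j.succAbove) b} := ⟨by omega, by omega, hkey⟩
    have hbdd' : BddAbove {p : ℕ | 1 ≤ p ∧ p ≤ n ∧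
        ∀ a b : Fin n, (b.val : ℤ) - (a.val : ℤ) = (n : ℤ) - (p : ℤ) →
          (ℓ ∘ i.succAbove) a ≤ (m ∘ j.succAbove) b} := ⟨n, fun x hx => hx.2.1⟩
    have hle : α - 1 ≤ kAlpha n (ℓ ∘ i.succAbove) (m ∘ j.succAbove) := le_csSup hbdd' hmem'
    omega
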